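/- arXiv:math/0406432 — 2 statements merged into one kernel-verified Lean document; each statement's English description precedes it below -/
import Mathlib

section
/- Let φ₀, φ₁, φ₂, … be identically distributed real random variables with E[log⁺|φ₀|] < ∞. Then for every z with |z| < 1, the series ∑_{k≥1} φ_k z^k converges almost surely. -/
open MeasureTheory

/-- Identically distributed random variables with finite log-moment:
random power series converge a.s. for |z| < 1. -/
theorem random_power_series_converges
    {Ω : Type*} [MeasurableSpace Ω] (μ : Measure Ω) [IsProbabilityMeasure μ]
    (φ : ℕ → Ω → ℝ) (hmeas : ∀ k, Measurable (φ k))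
    (hid : ∀ k, Measure.map (φ k) μ = Measure.map (φ 0) μ)
    (hlog : Integrable (fun ω => max (Real.log |φ 0 ω|) 0) μ) :
    ∀ z : ℝ, |z| < 1 →
      ∀ᵐ ω ∂μ, Summable (fun k : ℕ => φ (k + 1) ω * z ^ (k + 1)) := by
  intro z hz
  rcases eq_or_ne z 0 with rfl | hz0
  · filter_upwards with ω
    apply summable_of_ne_finset_zero (s := ∅)
    intro k _
    simp
  have hzpos : 0 < |z| := abs_pos.mpr hz0
  -- choose c with 1 < c and c * |z| < 1
  set c : ℝ := (1 + |z|) / (2 * |z|) with hc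
  have hc1 : 1 < c := by
    rw [hc, lt_div_iff₀ (by positivity)]
    linarith
  have hcz : c * |z| < 1 := by
    have h : c * |z| = (1 + |z|) / 2 := by
      rw [hc]; field_simp
    rw [h]; linarith
  have hcpos : 0 < c := lt_trans one_pos hc1
  have hlogc : 0 < Real.log c := Real.log_pos hc1
  -- the rescaled log-moment variable
  set X : Ω → ℝ := fun ω => max (Real.log |φ 0 ω|) 0 / Real.log c with hX
  have hXint : Integrable X μ := hlog.div_const _
  have hXnonneg : 0 ≤ X := fun ω => div_nonneg (le_max_right _ _) hlogc.le
  -- Borel-Cantelli events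
  set s : ℕ → Set Ω := fun k => {ω | c ^ k < |φ k ω|} with hs
  have hsum : (∑' k, μ (s k)) ≠ ⊤ := by
    have hmap : ∀ k, μ (s k) = μ {ω | c ^ k < |φ 0 ω|} := by
      intro k
      have hms : MeasurableSet {x : ℝ | c ^ k < |x|} :=
        measurable_abs measurableSet_Ioi
      have h1 : s k = φ k ⁻¹' {x : ℝ | c ^ k < |x|} := rfl
      have h2 : {ω | c ^ k < |φ 0 ω|} = φ 0 ⁻¹' {x : ℝ | c ^ k < |x|} := rfl
      rw [h1, h2, ← Measure.map_apply (hmeas k) hms, ← Measure.map_apply (hmeas 0) hms, hid k]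
    have hincl : ∀ k : ℕ, {ω | c ^ k < |φ 0 ω|} ⊆ {ω | X ω ∈ Set.Ioi (k : ℝ)} := by
      intro k ω hω
      simp only [Set.mem_setOf_eq] at hω ⊢
      have h1 : (k : ℝ) * Real.log c < Real.log |φ 0 ω| := by
        have := Real.log_lt_log (by positivity) hω
        rwa [Real.log_pow] at this
      have h2 : (k : ℝ) * Real.log c < max (Real.log |φ 0 ω|) 0 :=
        lt_of_lt_of_le h1 (le_max_left _ _)
      simp only [Set.mem_Ioi, hX]
      rw [lt_div_iff₀ hlogc]
      exact h2
    apply ne_top_of_lt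
    calc (∑' k, μ (s k)) ≤ ∑' k : ℕ, μ {ω | X ω ∈ Set.Ioi (k : ℝ)} := by
          apply ENNReal.tsum_le_tsum
          intro k
          rw [hmap k]
          exact measure_mono (hincl k)
      _ < ⊤ := by
          letI : MeasureSpace Ω := ⟨μ⟩
          exact ProbabilityTheory.tsum_prob_mem_Ioi_lt_top hXint hXnonneg
  have hBC := MeasureTheory.ae_eventually_notMem hsum
  filter_upwards [hBC] with ω hω
  rw [Filter.eventually_atTop] at hω
  obtain ⟨N, hN⟩ := hω
  apply Summable.of_norm_bounded_eventually_nat (g := fun k => (c * |z|) ^ (k + 1))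
  · exact (summable_geometric_of_lt_one (by positivity) hcz).comp_injective
      (add_left_injective 1)
  · rw [Filter.eventually_atTop]
    refine ⟨N, fun k hk => ?_⟩
    have h1 : ω ∉ s (k + 1) := hN (k + 1) (by omega)
    simp only [hs, Set.mem_setOf_eq, not_lt] at h1
    have : ‖φ (k + 1) ω * z ^ (k + 1)‖ = |φ (k + 1) ω| * |z| ^ (k + 1) := by
      rw [Real.norm_eq_abs, abs_mul, abs_pow]
    rw [this, mul_pow]
    exact mul_le_mul_of_nonneg_right h1 (by positivity)
end

section
/- For ϑ > 5, let τ²_quasi = (1/4)·(6(ϑ-2)(ϑ-3)/((ϑ-4)(ϑ-5)) - 1) and τ²_exp = 2(ϑ-2)/(ϑ-3) - 1. Then τ²_quasi > τ²_exp for all ϑ > 5. -/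
/-- Algebraic comparison of the asymptotic variance factors: for all `ϑ > 5`,
`τ²_quasi = (1/4)(6(ϑ-2)(ϑ-3)/((ϑ-4)(ϑ-5)) - 1)` exceeds
`τ²_exp = 2(ϑ-2)/(ϑ-3) - 1`. -/
theorem tau_quasi_gt_tau_exp (ϑ : ℝ) (hϑ : 5 < ϑ) :
    (1 / 4) * (6 * (ϑ - 2) * (ϑ - 3) / ((ϑ - 4) * (ϑ - 5)) - 1) >
      2 * (ϑ - 2) / (ϑ - 3) - 1 := by
  have h3 : (0:ℝ) < ϑ - 3 := by linarith
  have h4 : (0:ℝ) < ϑ - 4 := by linarith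
  have h5 : (0:ℝ) < ϑ - 5 := by linarith
  rw [gt_iff_lt, div_sub' h3.ne', div_lt_iff₀ h3]
  rw [one_div, inv_mul_eq_div, div_sub' (mul_pos h4 h5).ne',
    div_div, div_mul_eq_mul_div, lt_div_iff₀ (by positivity : (0:ℝ) < (ϑ-4)*(ϑ-5)*4)]
  nlinarith [sq_nonneg (ϑ - 5), sq_nonneg (ϑ*ϑ - 9*ϑ + 10), mul_pos h3 h5, mul_pos h4 h5, sq_nonneg ϑ, mul_pos (mul_pos h3 h4) h5]
end
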